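/- For every integer n ≥ 2, the polynomial R_n(x) is divisible by (x+1)^{⌊n/2⌋−1} in ℤ[x]. -/
import Mathlib


open Polynomial Finset

/-- The value (in `{0,…,n-1}`) of the permutation `π` at the 0-indexed position `j`
(junk value `0` outside the range). -/
def permVal {n : ℕ} (π : Equiv.Perm (Fin n)) (j : ℕ) : ℕ :=
  if h : j < n then ((π ⟨j, h⟩ : Fin n) : ℕ) else 0

/-- `π` changes direction at the 0-indexed position `i`
(i.e. at the 1-indexed position `i+1`). -/
def changesDir {n : ℕ} (π : Equiv.Perm (Fin n)) (i : ℕ) : Prop :=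
  (permVal π (i - 1) < permVal π i ∧ permVal π (i + 1) < permVal π i) ∨
  (permVal π i < permVal π (i - 1) ∧ permVal π i < permVal π (i + 1))

instance {n : ℕ} (π : Equiv.Perm (Fin n)) (i : ℕ) : Decidable (changesDir π i) := by
  unfold changesDir; infer_instance

/-- The number of alternating runs of `π ∈ S_n`: one more than the number of
1-indexed positions `i ∈ {2,…,n-1}` (0-indexed `i ∈ {1,…,n-2}`) where `π` changes direction. -/
def altRuns (n : ℕ) (π : Equiv.Perm (Fin n)) : ℕ :=
  1 + ((Finset.Ioo 0 (n - 1)).filter (fun i => changesDir π i)).card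

/-- The alternating run polynomial `R_n(x) = Σ_k R(n,k) x^k`, over `ℤ`. -/
noncomputable def Rpoly (n : ℕ) : Polynomial ℤ :=
  ∑ π : Equiv.Perm (Fin n), Polynomial.X ^ altRuns n π

/-- The comparison word of a permutation. -/
def wrd {n : ℕ} (π : Equiv.Perm (Fin n)) (i : ℕ) : Bool :=
  decide (permVal π i < permVal π (i + 1))

/-- Number of changes in the first `k+1` letters of word `W` (i.e. among `k` adjacent pairs). -/
def chg (W : ℕ → Bool) (k : ℕ) : ℕ :=
  ((Finset.range k).filter (fun i => W i ≠ W (i + 1))).card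

lemma permVal_lt {n : ℕ} (π : Equiv.Perm (Fin n)) {j : ℕ} (h : j < n) :
    permVal π j < n := by
  simp only [permVal, dif_pos h]
  exact (π ⟨j, h⟩).isLt

lemma permVal_ne {n : ℕ} (π : Equiv.Perm (Fin n)) {j j' : ℕ} (h : j < n) (h' : j' < n)
    (hne : j ≠ j') : permVal π j ≠ permVal π j' := by
  simp only [permVal, dif_pos h, dif_pos h']
  intro hc
  exact hne (by simpa [Fin.ext_iff] using π.injective (Fin.val_injective hc))

lemma changesDir_iff {n : ℕ} (π : Equiv.Perm (Fin n)) {i : ℕ} (h0 : 0 < i) (h1 : i < n - 1) :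
    changesDir π i ↔ (wrd π (i - 1) ≠ wrd π i) := by
  have hi : i < n := by omega
  have hi1 : i + 1 < n := by omega
  have hi0 : i - 1 < n := by omega
  have e1 : i - 1 + 1 = i := by omega
  have d1 := permVal_ne π hi0 hi (by omega)
  have d2 := permVal_ne π hi hi1 (by omega)
  unfold changesDir wrd
  rw [e1]
  rcases lt_or_gt_of_ne d1 with h | h <;> rcases lt_or_gt_of_ne d2 with h' | h' <;>
    simp [h, h', not_lt_of_gt, asymm] <;> omega

lemma altRuns_eq (n : ℕ) (hn : 2 ≤ n) (π : Equiv.Perm (Fin n)) :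
    altRuns n π = 1 + chg (wrd π) (n - 2) := by
  unfold altRuns chg
  congr 1
  apply Finset.card_bij' (fun i _ => i - 1) (fun j _ => j + 1) ?hi ?hj ?li ?ri
  case hi =>
    intro i hi
    simp only [mem_filter, mem_Ioo] at hi
    simp only [mem_filter, mem_range]
    refine ⟨by omega, ?_⟩
    rw [(by omega : i - 1 + 1 = i)]
    exact ((changesDir_iff π hi.1.1 hi.1.2).mp hi.2)
  case hj =>
    intro j hj
    simp only [mem_filter, mem_range] at hj
    simp only [mem_filter, mem_Ioo]
    refine ⟨⟨by omega, by omega⟩, ?_⟩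
    rw [changesDir_iff π (by omega) (by omega)]
    simpa using hj.2
  case li => intro i hi; simp only [mem_filter, mem_Ioo] at hi; show i - 1 + 1 = i; omega
  case ri => intro j hj; show j + 1 - 1 = j; omega

/-- Insert the maximal value `m` at position `p`. -/
def ins {m : ℕ} (σ : Equiv.Perm (Fin m)) (p : Fin (m + 1)) : Equiv.Perm (Fin (m + 1)) :=
  (finSuccEquiv' p).trans ((Equiv.optionCongr σ).trans (finSuccEquiv' (Fin.last m)).symm)

lemma ins_apply_self {m : ℕ} (σ : Equiv.Perm (Fin m)) (p : Fin (m + 1)) :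
    ins σ p p = Fin.last m := by
  simp [ins, finSuccEquiv'_at]

lemma ins_apply_succAbove {m : ℕ} (σ : Equiv.Perm (Fin m)) (p : Fin (m + 1)) (j : Fin m) :
    ins σ p (p.succAbove j) = Fin.castSucc (σ j) := by
  simp [ins, finSuccEquiv'_succAbove, ← Fin.succAbove_last]

lemma permVal_ins_lt {m : ℕ} (σ : Equiv.Perm (Fin m)) (p : Fin (m + 1)) {j : ℕ}
    (hj : j < (p : ℕ)) : permVal (ins σ p) j = permVal σ j := by
  have hjm : j < m := by have := p.isLt; omega
  have hjm1 : j < m + 1 := by omega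
  have h1 : (⟨j, hjm1⟩ : Fin (m + 1)) = p.succAbove ⟨j, hjm⟩ := by
    rw [Fin.succAbove_of_castSucc_lt]
    · rfl
    · simpa [Fin.lt_iff_val_lt_val] using hj
  simp only [permVal, dif_pos hjm1, dif_pos hjm, h1, ins_apply_succAbove]
  rfl

lemma permVal_ins_self {m : ℕ} (σ : Equiv.Perm (Fin m)) (p : Fin (m + 1)) :
    permVal (ins σ p) (p : ℕ) = m := by
  have hp : (p : ℕ) < m + 1 := p.isLt
  simp only [permVal, dif_pos hp]
  have : (⟨(p : ℕ), hp⟩ : Fin (m + 1)) = p := rfl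
  rw [this, ins_apply_self]
  rfl

lemma permVal_ins_gt {m : ℕ} (σ : Equiv.Perm (Fin m)) (p : Fin (m + 1)) {j : ℕ}
    (hj : (p : ℕ) < j) (hjm : j < m + 1) : permVal (ins σ p) j = permVal σ (j - 1) := by
  have hj1 : j - 1 < m := by omega
  have h1 : (⟨j, hjm⟩ : Fin (m + 1)) = p.succAbove ⟨j - 1, hj1⟩ := by
    rw [Fin.succAbove_of_le_castSucc]
    · simp [Fin.ext_iff, Fin.val_succ]; omega
    · simp [Fin.le_iff_val_le_val, Fin.coe_castSucc]; omega
  simp only [permVal, dif_pos hjm, dif_pos hj1, h1, ins_apply_succAbove]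
  rfl

/-- The word obtained from `W` by inserting the two letters `true, false`
"at slot `q`" (replacing letter `q-1` by `true, false`; prepend `false` if `q = 0`). -/
def inw (W : ℕ → Bool) (q : ℕ) (i : ℕ) : Bool :=
  if i + 1 < q then W i else if i + 1 = q then true else if i = q then false else W (i - 1)

lemma wrd_ins {m : ℕ} (σ : Equiv.Perm (Fin m)) (p : Fin (m + 1)) {i : ℕ} (hi : i < m) :
    wrd (ins σ p) i = inw (wrd σ) (p : ℕ) i := by
  have hp := p.isLt
  unfold wrd inw
  rcases lt_trichotomy (i + 1) (p : ℕ) with h | h | h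
  · rw [if_pos h, permVal_ins_lt σ p (by omega), permVal_ins_lt σ p h]
  · rw [if_neg (by omega), if_pos h, permVal_ins_lt σ p (by omega)]
    have h2 : permVal (ins σ p) (i + 1) = m := by rw [h]; exact permVal_ins_self σ p
    rw [h2]
    simp [permVal_lt σ (show i < m by omega)]
  · rw [if_neg (by omega), if_neg (by omega)]
    rcases eq_or_lt_of_le (Nat.lt_succ_iff.mp h) with h' | h'
    · subst h'
      rw [if_pos rfl, permVal_ins_self, permVal_ins_gt σ p (by omega) (by omega)]
      simp only [Nat.add_sub_cancel]
      have := permVal_lt σ (show (p : ℕ) < m from hi)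
      simp; omega
    · rw [if_neg (by omega), permVal_ins_gt σ p (by omega) (by omega),
        permVal_ins_gt σ p (by omega) (by omega),
        (show i + 1 - 1 = i - 1 + 1 by omega)]

lemma chg_succ (W : ℕ → Bool) (k : ℕ) :
    chg W (k + 1) = chg W k + (if W k ≠ W (k + 1) then 1 else 0) := by
  unfold chg
  rw [Finset.range_add_one, Finset.filter_insert]
  split_ifs with h
  · rw [Finset.card_insert_of_notMem (by simp)]
  · simp

lemma chg_le (W : ℕ → Bool) (k : ℕ) : chg W k ≤ k := by
  simpa [chg] using (Finset.card_filter_le (Finset.range k) _)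

lemma chg_congr {W W' : ℕ → Bool} {k : ℕ} (h : ∀ i ≤ k, W i = W' i) :
    chg W k = chg W' k := by
  unfold chg
  congr 1
  apply Finset.filter_congr
  intro i hi
  simp only [Finset.mem_range] at hi
  rw [h i (by omega), h (i + 1) (by omega)]

/-- The run-change increment contributed by replacing letter `j` of the `L`-letter
word `W` by the two letters `true, false`. -/
def del' (W : ℕ → Bool) (L j : ℕ) : ℕ :=
  if W j then (if j = L - 1 then 1 else if W (j + 1) then 2 else 0)
  else (if j = 0 then 1 else if W (j - 1) then 0 else 2)

/-- The increment in the number of changes when inserting `true, false` at slot `q`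
of the `L`-letter word `W`. -/
def dd (W : ℕ → Bool) (L q : ℕ) : ℕ :=
  if q = 0 then (if W 0 then 1 else 0)
  else if q = L + 1 then (if W (L - 1) then 0 else 1)
  else del' W L (q - 1)

lemma dd_zero (W : ℕ → Bool) (L : ℕ) : dd W L 0 = if W 0 then 1 else 0 := by
  simp [dd]

lemma dd_top (W : ℕ → Bool) (L : ℕ) : dd W L (L + 1) = if W (L - 1) then 0 else 1 := by
  simp [dd]

lemma dd_mid (W : ℕ → Bool) {L q : ℕ} (h0 : 0 < q) (h1 : q ≤ L) :
    dd W L q = del' W L (q - 1) := by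
  unfold dd
  rw [if_neg (by omega), if_neg (by omega)]

lemma del'_true_last (W : ℕ → Bool) {L j : ℕ} (hW : W j = true) (hj : j = L - 1) :
    del' W L j = 1 := by
  subst hj; simp [del', hW]

lemma del'_true_mid (W : ℕ → Bool) {L j : ℕ} (hW : W j = true) (hj : j ≠ L - 1) :
    del' W L j = if W (j + 1) then 2 else 0 := by
  simp [del', hW, hj]

lemma del'_false_first (W : ℕ → Bool) {L j : ℕ} (hW : W j = false) (hj : j = 0) :
    del' W L j = 1 := by
  subst hj; simp [del', hW]

lemma del'_false_mid (W : ℕ → Bool) {L j : ℕ} (hW : W j = false) (hj : j ≠ 0) :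
    del' W L j = if W (j - 1) then 0 else 2 := by
  simp [del', hW, hj]

lemma chg_one (V : ℕ → Bool) : chg V 1 = if V 0 ≠ V 1 then 1 else 0 := by
  rw [show (1 : ℕ) = 0 + 1 from rfl, chg_succ]
  simp [chg]

lemma inw_lt {W : ℕ → Bool} {q i : ℕ} (h : i + 1 < q) : inw W q i = W i := by
  unfold inw; rw [if_pos h]

lemma inw_T {W : ℕ → Bool} {q i : ℕ} (h : i + 1 = q) : inw W q i = true := by
  unfold inw; rw [if_neg (by omega), if_pos h]

lemma inw_F {W : ℕ → Bool} {q i : ℕ} (h : i = q) : inw W q i = false := by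
  unfold inw; rw [if_neg (by omega), if_neg (by omega), if_pos h]

lemma inw_gt {W : ℕ → Bool} {q i : ℕ} (h : q < i) : inw W q i = W (i - 1) := by
  unfold inw; rw [if_neg (by omega), if_neg (by omega), if_neg (by omega)]

lemma chg_inw (W : ℕ → Bool) : ∀ L, 1 ≤ L → ∀ q ≤ L + 1,
    chg (inw W q) L = chg W (L - 1) + dd W L q := by
  intro L
  induction L with
  | zero => omega
  | succ L IH =>
    intro _ q hq
    rcases Nat.eq_zero_or_pos L with rfl | hL
    · -- base case L = 1, q ∈ {0,1,2}
      rw [chg_one]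
      show _ = chg W 0 + dd W 1 q
      rw [show chg W 0 = 0 from by simp [chg]]
      interval_cases q
      · rw [inw_F rfl, inw_gt (by omega), dd_zero]
        rcases hW : W 0 <;> simp [hW]
      · rw [inw_T rfl, inw_F rfl, dd_mid W (by omega) (by omega),
          show (1 : ℕ) - 1 = 0 from rfl]
        rcases hW : W 0 <;> simp [hW]
        · rw [del'_false_first W hW rfl]
        · rw [del'_true_last W hW rfl]
      · rw [inw_lt (by omega), inw_T rfl, dd_top]
        rcases hW : W 0 <;> simp [hW]
    · -- inductive step, L ≥ 1
      rw [chg_succ]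
      have hcL : chg W (L + 1 - 1) = chg W (L - 1) + (if W (L - 1) ≠ W L then 1 else 0) := by
        rw [show L + 1 - 1 = (L - 1) + 1 from by omega, chg_succ,
          show L - 1 + 1 = L from by omega]
      rcases Nat.lt_or_ge q (L + 2) with hq2 | hq2
      · -- q ≤ L + 1 : use IH
        rw [IH hL q (by omega), hcL]
        have goal2 : dd W L q + (if inw W q L ≠ inw W q (L + 1) then 1 else 0)
            = (if W (L - 1) ≠ W L then 1 else 0) + dd W (L + 1) q := by
          rcases Nat.eq_zero_or_pos q with rfl | hq0
          · -- q = 0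
            rw [inw_gt (by omega), inw_gt (by omega), dd_zero, dd_zero,
              show L + 1 - 1 = L from rfl]
            omega
          rcases Nat.lt_or_ge q L with hqL | hqL
          · -- 1 ≤ q ≤ L - 1
            rw [inw_gt (by omega), inw_gt (by omega), show L + 1 - 1 = L from rfl,
              dd_mid W hq0 (by omega), dd_mid W hq0 (by omega)]
            have e3 : del' W L (q - 1) = del' W (L + 1) (q - 1) := by
              rcases hA : W (q - 1)
              · rcases Nat.eq_zero_or_pos (q - 1) with h1 | h1
                · rw [del'_false_first W hA h1, del'_false_first W hA h1]
                · rw [del'_false_mid W hA (by omega), del'_false_mid W hA (by omega)]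
              · rw [del'_true_mid W hA (by omega), del'_true_mid W hA (by omega)]
            omega
          rcases Nat.eq_or_lt_of_le hqL with hqL' | hqL'
          · -- q = L
            subst hqL'
            rw [inw_F rfl, inw_gt (by omega), show L + 1 - 1 = L from rfl,
              dd_mid W hq0 (le_refl L), dd_mid W hq0 (by omega)]
            rcases hA : W (L - 1)
            · have e2 : del' W (L + 1) (L - 1) = del' W L (L - 1) := by
                rcases Nat.eq_zero_or_pos (L - 1) with h1 | h1
                · rw [del'_false_first W hA h1, del'_false_first W hA h1]
                · rw [del'_false_mid W hA (by omega), del'_false_mid W hA (by omega)]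
              rw [e2]
              rcases hB : W L <;> simp [hA, hB] <;> omega
            · rw [del'_true_last W hA (by omega),
                del'_true_mid W hA (by omega), show L - 1 + 1 = L from by omega]
              rcases hB : W L <;> simp [hA, hB] <;> omega
          · -- q = L + 1
            have hqe : q = L + 1 := by omega
            subst hqe
            rw [inw_T rfl, inw_F rfl, dd_top, dd_mid W hq0 (by omega),
              show L + 1 - 1 = L from rfl]
            rcases hB : W L
            · rw [del'_false_mid W hB (by omega)]
              rcases hA : W (L - 1) <;> simp [hA, hB] <;> omega
            · rw [del'_true_last W hB (by omega)]
              rcases hA : W (L - 1) <;> simp [hA, hB] <;> omega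
        omega
      · -- q = L + 2, no IH
        have hqe : q = L + 2 := by omega
        subst hqe
        have e0 : chg (inw W (L + 2)) L = chg W L := by
          apply chg_congr
          intro i hi
          exact inw_lt (by omega)
        rw [e0, inw_lt (by omega), inw_T rfl, hcL, dd_top,
          show L + 1 - 1 = L from rfl, show chg W L = chg W (L - 1 + 1) from by rw [show L - 1 + 1 = L from by omega], chg_succ, show L - 1 + 1 = L from by omega]
        rcases hA : W (L - 1) <;> rcases hB : W L <;> simp [hA, hB]

lemma dd_stable (W : ℕ → Bool) {L q : ℕ} (hL : 1 ≤ L) (hq : q ≤ L - 1) :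
    dd W (L + 1) q = dd W L q := by
  rcases Nat.eq_zero_or_pos q with rfl | hq0
  · rw [dd_zero, dd_zero]
  · rw [dd_mid W hq0 (by omega), dd_mid W hq0 (by omega)]
    rcases hA : W (q - 1)
    · rcases Nat.eq_zero_or_pos (q - 1) with h1 | h1
      · rw [del'_false_first W hA h1, del'_false_first W hA h1]
      · rw [del'_false_mid W hA (by omega), del'_false_mid W hA (by omega)]
    · rw [del'_true_mid W hA (by omega), del'_true_mid W hA (by omega)]

lemma dd_sum (W : ℕ → Bool) : ∀ L, 1 ≤ L →
    ∑ q ∈ Finset.range (L + 2), (Polynomial.X : Polynomial ℤ) ^ dd W L q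
      = ((chg W (L - 1) : ℕ) : Polynomial ℤ) + 1 + 2 * Polynomial.X
        + ((L : Polynomial ℤ) - 1 - ((chg W (L - 1) : ℕ) : Polynomial ℤ)) * Polynomial.X ^ 2 := by
  intro L
  induction L with
  | zero => omega
  | succ L IH =>
    intro _
    rcases Nat.eq_zero_or_pos L with rfl | hL
    · -- base L = 1
      rw [show (1 : ℕ) + 2 = 2 + 1 from rfl, Finset.sum_range_succ, Finset.sum_range_succ,
        Finset.sum_range_one]
      rw [dd_zero, dd_top, show (1 : ℕ) - 1 = 0 from rfl,
        dd_mid W (by omega) (by omega), show (1 : ℕ) - 1 = 0 from rfl]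
      have hc : chg W 0 = 0 := by simp [chg]
      have hd : del' W 1 0 = 1 := by
        rcases hW : W 0
        · exact del'_false_first W hW rfl
        · exact del'_true_last W hW rfl
      rw [hd, hc]
      rcases hW : W 0 <;> simp [hW] <;> ring
    · -- step, L ≥ 1
      have hcast : ((chg W L : ℕ) : Polynomial ℤ)
          = ((chg W (L - 1) : ℕ) : Polynomial ℤ)
            + (if W (L - 1) ≠ W L then (1 : Polynomial ℤ) else 0) := by
        have : chg W L = chg W (L - 1) + (if W (L - 1) ≠ W L then 1 else 0) := by
          rw [show L = L - 1 + 1 from by omega, chg_succ, show L - 1 + 1 = L from by omega]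
        rw [this]
        push_cast
        split_ifs <;> simp
      -- peel the three top terms of the new sum
      rw [show L + 1 + 2 = (L + 2) + 1 from rfl, Finset.sum_range_succ,
        show L + 2 = (L + 1) + 1 from rfl, Finset.sum_range_succ, Finset.sum_range_succ]
      -- rewrite the low part using dd_stable
      have hlow : ∑ q ∈ Finset.range L, (Polynomial.X : Polynomial ℤ) ^ dd W (L + 1) q
          = ∑ q ∈ Finset.range L, (Polynomial.X : Polynomial ℤ) ^ dd W L q := by
        apply Finset.sum_congr rfl
        intro q hq
        rw [dd_stable W hL (by simp at hq; omega)]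
      rw [hlow]
      -- peel the IH sum
      have hIH := IH hL
      rw [show L + 2 = (L + 1) + 1 from rfl, Finset.sum_range_succ, Finset.sum_range_succ] at hIH
      have hlow2 : ∑ q ∈ Finset.range L, (Polynomial.X : Polynomial ℤ) ^ dd W L q
          = (((chg W (L - 1) : ℕ) : Polynomial ℤ) + 1 + 2 * Polynomial.X
              + ((L : Polynomial ℤ) - 1 - ((chg W (L - 1) : ℕ) : Polynomial ℤ)) * Polynomial.X ^ 2)
            - Polynomial.X ^ dd W L L - Polynomial.X ^ dd W L (L + 1) := by
        rw [← hIH]; ring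
      rw [hlow2, show (L + 1 : ℕ) - 1 = L from rfl]
      -- compute all the dd values
      have hu2 : dd W L (L + 1) = if W (L - 1) then 0 else 1 := dd_top W L
      have hc' : dd W (L + 1) (L + 1 + 1) = if W L then 0 else 1 := by
        rw [show L + 1 + 1 = (L + 1) + 1 from rfl, dd_top, show L + 1 - 1 = L from rfl]
      rw [hu2, hc']
      have hmid1 : dd W L L = del' W L (L - 1) := by
        rw [dd_mid W hL (le_refl L)]
      have hmid2 : dd W (L + 1) L = del' W (L + 1) (L - 1) := by
        rw [dd_mid W hL (by omega)]
      have hmid3 : dd W (L + 1) (L + 1) = del' W (L + 1) L := by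
        rw [dd_mid W (by omega) (by omega), show L + 1 - 1 = L from rfl]
      rw [hmid1, hmid2, hmid3, hcast]
      rcases hA : W (L - 1) <;> rcases hB : W L
      · -- FF
        have t1 : del' W (L + 1) (L - 1) = del' W L (L - 1) := by
          rcases Nat.eq_zero_or_pos (L - 1) with h1 | h1
          · rw [del'_false_first W hA h1, del'_false_first W hA h1]
          · rw [del'_false_mid W hA (by omega), del'_false_mid W hA (by omega)]
        have t2 : del' W (L + 1) L = 2 := by
          rw [del'_false_mid W hB (by omega), hA]
          rfl
        rw [t1, t2]
        simp [hA, hB]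
        push_cast
        ring
      · -- A = false, B = true
        have t1 : del' W (L + 1) (L - 1) = del' W L (L - 1) := by
          rcases Nat.eq_zero_or_pos (L - 1) with h1 | h1
          · rw [del'_false_first W hA h1, del'_false_first W hA h1]
          · rw [del'_false_mid W hA (by omega), del'_false_mid W hA (by omega)]
        have t2 : del' W (L + 1) L = 1 := del'_true_last W hB (by omega)
        rw [t1, t2]
        simp [hA, hB]
        push_cast
        ring
      · -- A = true, B = false
        have t1 : del' W L (L - 1) = 1 := del'_true_last W hA rfl
        have t2 : del' W (L + 1) (L - 1) = 0 := by
          rw [del'_true_mid W hA (by omega), show L - 1 + 1 = L from by omega, hB]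
          rfl
        have t3 : del' W (L + 1) L = 0 := by
          rw [del'_false_mid W hB (by omega), hA]
          rfl
        rw [t1, t2, t3]
        simp [hA, hB]
        push_cast
        ring
      · -- TT
        have t1 : del' W L (L - 1) = 1 := del'_true_last W hA rfl
        have t2 : del' W (L + 1) (L - 1) = 2 := by
          rw [del'_true_mid W hA (by omega), show L - 1 + 1 = L from by omega, hB]
          rfl
        have t3 : del' W (L + 1) L = 1 := del'_true_last W hB (by omega)
        rw [t1, t2, t3]
        simp [hA, hB]
        push_cast
        ring

lemma ins_injective (m : ℕ) :
    Function.Injective (fun sp : Equiv.Perm (Fin m) × Fin (m + 1) => ins sp.1 sp.2) := by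
  rintro ⟨σ, p⟩ ⟨σ', p'⟩ h
  simp only at h
  have hp : p = p' := by
    have h1 : (ins σ p).symm (Fin.last m) = p := by
      rw [← ins_apply_self σ p, Equiv.symm_apply_apply]
    have h2 : (ins σ' p').symm (Fin.last m) = p' := by
      rw [← ins_apply_self σ' p', Equiv.symm_apply_apply]
    rw [← h1, ← h2, h]
  subst hp
  have hσ : σ = σ' := by
    apply Equiv.ext
    intro j
    have := congrArg (fun e : Equiv.Perm (Fin (m + 1)) => e (p.succAbove j)) h
    simp only [ins_apply_succAbove] at this
    exact Fin.castSucc_injective m this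
  rw [hσ]

lemma ins_bijective (m : ℕ) :
    Function.Bijective (fun sp : Equiv.Perm (Fin m) × Fin (m + 1) => ins sp.1 sp.2) := by
  rw [Fintype.bijective_iff_injective_and_card]
  refine ⟨ins_injective m, ?_⟩
  simp [Fintype.card_perm, Nat.factorial_succ, Nat.mul_comm]

lemma altRuns_le (m : ℕ) (hm : 2 ≤ m) (σ : Equiv.Perm (Fin m)) :
    altRuns m σ ≤ m - 1 := by
  rw [altRuns_eq m hm σ]
  have := chg_le (wrd σ) (m - 2)
  omega

lemma altRuns_pos (m : ℕ) (σ : Equiv.Perm (Fin m)) : 1 ≤ altRuns m σ := by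
  unfold altRuns; omega

/-- The key slot-sum formula. -/
lemma slot_sum (m : ℕ) (hm : 2 ≤ m) (σ : Equiv.Perm (Fin m)) :
    ∑ p : Fin (m + 1), (Polynomial.X : Polynomial ℤ) ^ altRuns (m + 1) (ins σ p)
      = Polynomial.X ^ altRuns m σ *
          ((altRuns m σ : Polynomial ℤ) + 2 * Polynomial.X
            + ((m : Polynomial ℤ) - 1 - (altRuns m σ : Polynomial ℤ)) * Polynomial.X ^ 2) := by
  have hL : 1 ≤ m - 1 := by omega
  have key : ∀ p : Fin (m + 1),
      altRuns (m + 1) (ins σ p) = altRuns m σ + dd (wrd σ) (m - 1) (p : ℕ) := by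
    intro p
    rw [altRuns_eq (m + 1) (by omega) (ins σ p), altRuns_eq m hm σ]
    have e1 : chg (wrd (ins σ p)) (m + 1 - 2) = chg (inw (wrd σ) (p : ℕ)) (m - 1) := by
      rw [show m + 1 - 2 = m - 1 from by omega]
      apply chg_congr
      intro i hi
      exact wrd_ins σ p (by omega)
    rw [e1, chg_inw (wrd σ) (m - 1) hL (p : ℕ) (by have := p.isLt; omega),
      show m - 1 - 1 = m - 2 from by omega]
    omega
  calc ∑ p : Fin (m + 1), (Polynomial.X : Polynomial ℤ) ^ altRuns (m + 1) (ins σ p)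
      = ∑ q ∈ Finset.range (m + 1),
          (Polynomial.X : Polynomial ℤ) ^ (altRuns m σ + dd (wrd σ) (m - 1) q) := by
        rw [← Fin.sum_univ_eq_sum_range]
        exact Finset.sum_congr rfl (fun p _ => by rw [key p])
    _ = Polynomial.X ^ altRuns m σ *
          ∑ q ∈ Finset.range (m + 1), (Polynomial.X : Polynomial ℤ) ^ dd (wrd σ) (m - 1) q := by
        rw [Finset.mul_sum]
        exact Finset.sum_congr rfl (fun q _ => pow_add _ _ _)
    _ = _ := by
        have := dd_sum (wrd σ) (m - 1) hL
        rw [show m - 1 + 2 = m + 1 from by omega] at this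
        rw [this, altRuns_eq m hm σ]
        have hc : ((chg (wrd σ) (m - 1 - 1) : ℕ) : Polynomial ℤ)
            = ((chg (wrd σ) (m - 2) : ℕ) : Polynomial ℤ) := by
          rw [show m - 1 - 1 = m - 2 from by omega]
        rw [hc]
        have hm1 : ((m - 1 : ℕ) : Polynomial ℤ) = (m : Polynomial ℤ) - 1 := by
          have : (m : ℕ) = (m - 1) + 1 := by omega
          rw [this]
          push_cast
          ring
        rw [hm1]
        push_cast
        ring

/-- The fundamental recurrence for `Rpoly`. -/
lemma Rpoly_rec (m : ℕ) (hm : 2 ≤ m) :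
    Rpoly (m + 1)
      = (1 - Polynomial.X ^ 2) * (Polynomial.X * Polynomial.derivative (Rpoly m))
        + (2 * Polynomial.X + ((m : Polynomial ℤ) - 1) * Polynomial.X ^ 2) * Rpoly m := by
  have hD : Polynomial.X * Polynomial.derivative (Rpoly m)
      = ∑ σ : Equiv.Perm (Fin m), (altRuns m σ : Polynomial ℤ) * Polynomial.X ^ altRuns m σ := by
    unfold Rpoly
    rw [Polynomial.derivative_sum, Finset.mul_sum]
    apply Finset.sum_congr rfl
    intro σ _
    obtain ⟨s, hs⟩ : ∃ s, altRuns m σ = s + 1 := ⟨altRuns m σ - 1, by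
      have := altRuns_pos m σ; omega⟩
    rw [hs, Polynomial.derivative_X_pow]
    simp only [Nat.add_sub_cancel]
    rw [Polynomial.C_eq_natCast]
    push_cast
    ring
  have hB : Rpoly (m + 1) = ∑ σ : Equiv.Perm (Fin m),
      Polynomial.X ^ altRuns m σ *
        ((altRuns m σ : Polynomial ℤ) + 2 * Polynomial.X
          + ((m : Polynomial ℤ) - 1 - (altRuns m σ : Polynomial ℤ)) * Polynomial.X ^ 2) := by
    unfold Rpoly
    rw [← Fintype.sum_bijective _ (ins_bijective m)
      (fun sp => Polynomial.X ^ altRuns (m + 1) (ins sp.1 sp.2))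
      (fun π => (Polynomial.X : Polynomial ℤ) ^ altRuns (m + 1) π) (fun sp => rfl)]
    rw [Fintype.sum_prod_type]
    exact Finset.sum_congr rfl (fun σ _ => slot_sum m hm σ)
  rw [hB, hD]
  unfold Rpoly
  rw [Finset.mul_sum, Finset.mul_sum, ← Finset.sum_add_distrib]
  apply Finset.sum_congr rfl
  intro σ _
  ring

/-- For `n ≥ 2`, `(x+1)^{⌊n/2⌋-1}` divides `R_n(x)` in `ℤ[x]`. -/
theorem stmt4 (n : ℕ) (hn : 2 ≤ n) :
    (Polynomial.X + 1) ^ (n / 2 - 1) ∣ Rpoly n := by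
  induction n, hn using Nat.le_induction with
  | base => simp
  | succ n hn2 IH =>
    rcases Nat.lt_or_ge n 3 with hn3 | hn3
    · -- n = 2 : exponent is 0
      rw [show (n + 1) / 2 - 1 = 0 from by omega, pow_zero]
      exact one_dvd _
    · -- n ≥ 3
      set k := n / 2 - 1 with hk
      obtain ⟨Q, hQ⟩ := IH
      set P : Polynomial ℤ := Polynomial.X + 1 with hP
      set dQ := Polynomial.derivative Q with hdQ
      have claim1 : P * (Polynomial.C (k : ℤ) * P ^ (k - 1) * Q)
          = Polynomial.C (k : ℤ) * P ^ k * Q := by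
        rcases Nat.eq_zero_or_pos k with hk0 | hk0
        · rw [hk0]; simp
        · obtain ⟨s, hs⟩ : ∃ s, k = s + 1 := ⟨k - 1, by omega⟩
          rw [hs]
          simp only [Nat.add_sub_cancel]
          rw [pow_succ]
          ring
      have hDer : Polynomial.derivative (Rpoly n)
          = Polynomial.C (k : ℤ) * P ^ (k - 1) * Q + P ^ k * dQ := by
        rw [hQ, Polynomial.derivative_mul, Polynomial.derivative_pow]
        simp [hP, hdQ]
      set B : Polynomial ℤ :=
        (1 - Polynomial.X) * Polynomial.X * (Polynomial.C (k : ℤ) * Q + P * dQ)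
          + (2 * Polynomial.X + ((n : Polynomial ℤ) - 1) * Polynomial.X ^ 2) * Q with hB
      have main : Rpoly (n + 1) = P ^ k * B := by
        rw [Rpoly_rec n (by omega), hDer, hQ, hB]
        linear_combination ((1 : Polynomial ℤ) - Polynomial.X) * Polynomial.X * claim1
      rcases Nat.even_or_odd n with he | ho
      · -- n even : same exponent
        have : (n + 1) / 2 - 1 = k := by
          obtain ⟨t, rfl⟩ := he; omega
        rw [this]
        exact ⟨B, main⟩
      · -- n odd : need one more factor of P
        obtain ⟨t, ht⟩ := ho
        have hexp : (n + 1) / 2 - 1 = k + 1 := by omega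
        have h2k : 2 * (k : ℤ) = (n : ℤ) - 3 := by
          have : 2 * k = n - 3 := by omega
          omega
        have hroot : Polynomial.IsRoot B (-1) := by
          have hq : Polynomial.eval (-1) Q = Polynomial.eval (-1) Q := rfl
          rw [hB]
          simp [Polynomial.IsRoot, hP]
          ring_nf
          linear_combination (-(Polynomial.eval (-1) Q)) * h2k
        have hdvd1 : P ∣ B := by
          have : P = Polynomial.X - Polynomial.C (-1) := by simp [hP]
          rw [this]
          exact (Polynomial.dvd_iff_isRoot).mpr hroot
        obtain ⟨B', hB'⟩ := hdvd1
        rw [hexp]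
        exact ⟨B', by rw [main, hB', pow_succ]; ring⟩
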